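/- arXiv:1406.2955 — 7 statements merged into one kernel-verified Lean document; each statement's English description precedes it below -/
import Mathlib

section
/- The sequence p_n satisfies p_0 = 1, p_1 = a_1, and the recurrence p_{n+1} = a_{n+1}·p_n + p_{n−1} for all 1 ≤ n ≤ m−1. -/
/-- The transposition (1 3) on strings {1,2,3}, encoded as `Fin 3 = {0,1,2}`
(string `r` corresponds to `r - 1 : Fin 3`). -/
def trans13 : Equiv.Perm (Fin 3) := Equiv.swap 0 2

/-- The 3-cycle (1 3 2) sending 1 ↦ 3, 3 ↦ 2, 2 ↦ 1, encoded on `Fin 3`: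
0 ↦ 2, 2 ↦ 1, 1 ↦ 0. -/
def cyc132 : Equiv.Perm (Fin 3) := Equiv.swap 0 1 * Equiv.swap 0 2

/-- The matrix `M(a, i, j)`: the only (possibly) nonzero entries are ⌊a/2⌋ at (i,i),
⌈(a-1)/2⌉ at (i,j), ⌈a/2⌉ at (j,i) and ⌊(a-1)/2⌋ at (j,j). -/
def Mmat (a : ℕ) (i j : Fin 3) : Matrix (Fin 3) (Fin 3) ℤ :=
  Matrix.of fun r t =>
    if r = i ∧ t = i then ⌊(a : ℚ) / 2⌋
    else if r = i ∧ t = j then ⌈((a : ℚ) - 1) / 2⌉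
    else if r = j ∧ t = i then ⌈(a : ℚ) / 2⌉
    else if r = j ∧ t = j then ⌊((a : ℚ) - 1) / 2⌋
    else 0

/-- Kronecker delta δ_{rt}. -/
def kd (r t : Fin 3) : ℕ := if r = t then 1 else 0

/-- `mu c = 1` if `c` is odd, `0` if `c` is even. -/
def mu (c : ℕ) : ℕ := if Odd c then 1 else 0

/- ### Auxiliary lemmas -/

lemma e1 (a : ℕ) (ha : Even a) : ⌊(a : ℚ) / 2⌋ * 2 = a := by
  obtain ⟨b, rfl⟩ := ha
  rw [show ((b + b : ℕ) : ℚ) / 2 = ((b : ℤ) : ℚ) by push_cast; ring, Int.floor_intCast]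
  push_cast; ring

lemma e2 (a : ℕ) (ha : Even a) : ⌈((a : ℚ) - 1) / 2⌉ * 2 = a := by
  obtain ⟨b, rfl⟩ := ha
  rw [show (((b + b : ℕ) : ℚ) - 1) / 2 = -(1/2) + (b : ℤ) by push_cast; ring,
    Int.ceil_add_intCast, show ⌈(-(1/2) : ℚ)⌉ = 0 by norm_num]
  push_cast; ring

lemma e3 (a : ℕ) (ha : Even a) : ⌈(a : ℚ) / 2⌉ * 2 = a := by
  obtain ⟨b, rfl⟩ := ha
  rw [show ((b + b : ℕ) : ℚ) / 2 = ((b : ℤ) : ℚ) by push_cast; ring, Int.ceil_intCast]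
  push_cast; ring

lemma e4 (a : ℕ) (ha : Even a) : ⌊((a : ℚ) - 1) / 2⌋ * 2 = (a : ℤ) - 2 := by
  obtain ⟨b, rfl⟩ := ha
  rw [show (((b + b : ℕ) : ℚ) - 1) / 2 = -(1/2) + (b : ℤ) by push_cast; ring,
    Int.floor_add_intCast, show ⌊(-(1/2) : ℚ)⌋ = -1 by norm_num]
  push_cast; ring

lemma o1 (a : ℕ) (ha : Odd a) : ⌊(a : ℚ) / 2⌋ * 2 = (a : ℤ) - 1 := by
  obtain ⟨b, rfl⟩ := ha
  rw [show ((2 * b + 1 : ℕ) : ℚ) / 2 = 1/2 + (b : ℤ) by push_cast; ring,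
    Int.floor_add_intCast, show ⌊((1/2) : ℚ)⌋ = 0 by norm_num]
  push_cast; ring

lemma o2 (a : ℕ) (ha : Odd a) : ⌈((a : ℚ) - 1) / 2⌉ * 2 = (a : ℤ) - 1 := by
  obtain ⟨b, rfl⟩ := ha
  rw [show (((2 * b + 1 : ℕ) : ℚ) - 1) / 2 = ((b : ℤ) : ℚ) by push_cast; ring,
    Int.ceil_intCast]
  push_cast; ring

lemma o3 (a : ℕ) (ha : Odd a) : ⌈(a : ℚ) / 2⌉ * 2 = (a : ℤ) + 1 := by
  obtain ⟨b, rfl⟩ := ha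
  rw [show ((2 * b + 1 : ℕ) : ℚ) / 2 = 1/2 + (b : ℤ) by push_cast; ring,
    Int.ceil_add_intCast, show ⌈((1/2) : ℚ)⌉ = 1 by norm_num [Int.ceil_eq_iff]]
  push_cast; ring

lemma o4 (a : ℕ) (ha : Odd a) : ⌊((a : ℚ) - 1) / 2⌋ * 2 = (a : ℤ) - 1 := by
  obtain ⟨b, rfl⟩ := ha
  rw [show (((2 * b + 1 : ℕ) : ℚ) - 1) / 2 = ((b : ℤ) : ℚ) by push_cast; ring,
    Int.floor_intCast]
  push_cast; ring

lemma addone_apply (M : Matrix (Fin 3) (Fin 3) ℤ) (r t : Fin 3) :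
    (2 * M + 1 : Matrix (Fin 3) (Fin 3) ℤ) r t = 2 * M r t + (if r = t then 1 else 0) := by
  rw [Matrix.add_apply, Matrix.one_apply, two_mul, Matrix.add_apply, two_mul]

lemma Mmat_entries (a : ℕ) (i j k : Fin 3) (hij : i ≠ j) (hik : i ≠ k) (hjk : j ≠ k) :
    Mmat a i j i i = ⌊(a : ℚ) / 2⌋ ∧ Mmat a i j i j = ⌈((a : ℚ) - 1) / 2⌉ ∧
    Mmat a i j i k = 0 ∧ Mmat a i j j i = ⌈(a : ℚ) / 2⌉ ∧
    Mmat a i j j j = ⌊((a : ℚ) - 1) / 2⌋ ∧ Mmat a i j j k = 0 ∧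
    Mmat a i j k i = 0 ∧ Mmat a i j k j = 0 ∧ Mmat a i j k k = 0 := by
  simp [Mmat, hij, hik, hjk, hij.symm, hik.symm, hjk.symm]

lemma trans13_vals : trans13 0 = 2 ∧ trans13 1 = 1 ∧ trans13 2 = 0 := by decide

lemma cyc132_vals : cyc132 0 = 2 ∧ cyc132 1 = 0 ∧ cyc132 2 = 1 := by decide

theorem p_recurrence
    (m : ℕ) (hm : 1 ≤ m) (a : ℕ → ℕ)
    (ha : ∀ n, 1 ≤ n → n ≤ m → 0 < a n)
    (σ : ℕ → Equiv.Perm (Fin 3))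
    (hσ1 : σ 1 = 1)
    (hσ : ∀ n, 1 ≤ n → n ≤ m →
      σ (n + 1) = if Even (a n) then σ n * trans13 else σ n * cyc132)
    (D : ℕ → Matrix (Fin 3) (Fin 3) ℤ)
    (hD0 : D 0 = 0)
    (hD : ∀ n, n + 1 ≤ m →
      D (n + 1) = 2 * Mmat (a (n + 1)) (σ (n + 1) 0) (σ (n + 1) 1) * D n + D n
        + Mmat (a (n + 1)) (σ (n + 1) 0) (σ (n + 1) 1))
    (s : ℕ → Fin 3 → ℤ)
    (hs : ∀ n t, s n t = D n 0 t + D n 1 t + D n 2 t)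
    (p q : ℕ → ℤ)
    (hp : ∀ n, p n = s n 0 + 1 - (mu n : ℤ))
    (hq : ∀ n, q n = s n 2 + (mu n : ℤ))
 :
    p 0 = 1 ∧ p 1 = (a 1 : ℤ) ∧
      ∀ n, 1 ≤ n → n + 1 ≤ m →
        p (n + 1) = (a (n + 1) : ℤ) * p n + p (n - 1) := by
  set E : ℕ → Matrix (Fin 3) (Fin 3) ℤ := fun n => 2 * D n + 1 with hEdef
  have hE0 : E 0 = 1 := by simp [hEdef, hD0]
  have hEstep : ∀ n, n + 1 ≤ m →
      E (n + 1) = (2 * Mmat (a (n + 1)) (σ (n + 1) 0) (σ (n + 1) 1) + 1) * E n := by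
    intro n hn
    simp only [hEdef]
    rw [hD n hn]
    noncomm_ring
  -- distinctness of permutation images
  have hne : ∀ n, (σ n 0 ≠ σ n 1) ∧ (σ n 0 ≠ σ n 2) ∧ (σ n 1 ≠ σ n 2) := by
    intro n
    refine ⟨fun h => ?_, fun h => ?_, fun h => ?_⟩ <;>
      · have := (σ n).injective h; exact absurd this (by decide)
  -- row expansion
  set A : ℕ → Matrix (Fin 3) (Fin 3) ℤ :=
    fun n => 2 * Mmat (a (n + 1)) (σ (n + 1) 0) (σ (n + 1) 1) + 1 with hAdef
  have hrow : ∀ n, n + 1 ≤ m → ∀ r : Fin 3,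
      E (n + 1) r 0 =
        A n r (σ (n + 1) 0) * E n (σ (n + 1) 0) 0 +
        A n r (σ (n + 1) 1) * E n (σ (n + 1) 1) 0 +
        A n r (σ (n + 1) 2) * E n (σ (n + 1) 2) 0 := by
    intro n hn r
    rw [show A n = 2 * Mmat (a (n + 1)) (σ (n + 1) 0) (σ (n + 1) 1) + 1 from rfl]
    rw [hEstep n hn, Matrix.mul_apply,
      ← Equiv.sum_comp (σ (n + 1))
        (fun u => (2 * Mmat (a (n + 1)) (σ (n + 1) 0) (σ (n + 1) 1) + 1 :
            Matrix (Fin 3) (Fin 3) ℤ) r u * E n u 0),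
      Fin.sum_univ_three]
  -- the step lemma
  have hstep : ∀ n, n + 1 ≤ m →
      E (n + 1) (σ (n + 2) 0) 0 = E n (σ (n + 1) 2) 0 ∧
      E (n + 1) (σ (n + 2) 1) 0 =
        (a (n + 1) : ℤ) * E n (σ (n + 1) 0) 0 + ((a (n + 1) : ℤ) - 1) * E n (σ (n + 1) 1) 0 ∧
      E (n + 1) (σ (n + 2) 2) 0 =
        ((a (n + 1) : ℤ) + 1) * E n (σ (n + 1) 0) 0 + (a (n + 1) : ℤ) * E n (σ (n + 1) 1) 0 := by
    intro n hn
    obtain ⟨d01, d02, d12⟩ := hne (n + 1)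
    obtain ⟨m1, m2, m3, m4, m5, m6, m7, m8, m9⟩ :=
      Mmat_entries (a (n + 1)) (σ (n + 1) 0) (σ (n + 1) 1) (σ (n + 1) 2) d01 d02 d12
    have hσ2 := hσ (n + 1) (by omega) hn
    have hrowi := hrow n hn (σ (n + 1) 0)
    have hrowj := hrow n hn (σ (n + 1) 1)
    have hrowk := hrow n hn (σ (n + 1) 2)
    rw [hAdef] at hrowi hrowj hrowk
    simp only at hrowi hrowj hrowk
    rw [addone_apply, addone_apply, addone_apply, m1, m2, m3,
      if_pos rfl, if_neg d01, if_neg d02] at hrowi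
    rw [addone_apply, addone_apply, addone_apply, m4, m5, m6,
      if_neg d01.symm, if_pos rfl, if_neg d12] at hrowj
    rw [addone_apply, addone_apply, addone_apply, m7, m8, m9,
      if_neg d02.symm, if_neg d12.symm, if_pos rfl] at hrowk
    rcases Nat.even_or_odd (a (n + 1)) with hpar | hpar
    · rw [if_pos hpar] at hσ2
      have v0 : σ (n + 2) 0 = σ (n + 1) 2 := by
        rw [hσ2, Equiv.Perm.mul_apply, trans13_vals.1]
      have v1 : σ (n + 2) 1 = σ (n + 1) 1 := by
        rw [hσ2, Equiv.Perm.mul_apply, trans13_vals.2.1]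
      have v2 : σ (n + 2) 2 = σ (n + 1) 0 := by
        rw [hσ2, Equiv.Perm.mul_apply, trans13_vals.2.2]
      refine ⟨?_, ?_, ?_⟩
      · rw [v0, hrowk]; ring
      · rw [v1, hrowj]
        linear_combination E n (σ (n + 1) 0) 0 * e3 (a (n + 1)) hpar +
          E n (σ (n + 1) 1) 0 * e4 (a (n + 1)) hpar
      · rw [v2, hrowi]
        linear_combination E n (σ (n + 1) 0) 0 * e1 (a (n + 1)) hpar +
          E n (σ (n + 1) 1) 0 * e2 (a (n + 1)) hpar
    · rw [if_neg (Nat.not_even_iff_odd.mpr hpar)] at hσ2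
      have v0 : σ (n + 2) 0 = σ (n + 1) 2 := by
        rw [hσ2, Equiv.Perm.mul_apply, cyc132_vals.1]
      have v1 : σ (n + 2) 1 = σ (n + 1) 0 := by
        rw [hσ2, Equiv.Perm.mul_apply, cyc132_vals.2.1]
      have v2 : σ (n + 2) 2 = σ (n + 1) 1 := by
        rw [hσ2, Equiv.Perm.mul_apply, cyc132_vals.2.2]
      refine ⟨?_, ?_, ?_⟩
      · rw [v0, hrowk]; ring
      · rw [v1, hrowi]
        linear_combination E n (σ (n + 1) 0) 0 * o1 (a (n + 1)) hpar +
          E n (σ (n + 1) 1) 0 * o2 (a (n + 1)) hpar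
      · rw [v2, hrowj]
        linear_combination E n (σ (n + 1) 0) 0 * o3 (a (n + 1)) hpar +
          E n (σ (n + 1) 1) 0 * o4 (a (n + 1)) hpar
  -- entries of E 0 under σ 1 = 1
  have hE00 : E 0 (σ 1 0) 0 = 1 := by rw [hσ1]; simp [hE0, Matrix.one_apply]
  have hE01 : E 0 (σ 1 1) 0 = 0 := by
    rw [hσ1]; simp [hE0, Matrix.one_apply]
  have hE02 : E 0 (σ 1 2) 0 = 0 := by
    rw [hσ1]; simp [hE0, Matrix.one_apply]
  -- the invariant
  have hinv : ∀ n, n ≤ m →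
      E n (σ (n + 1) 2) 0 = E n (σ (n + 1) 0) 0 + E n (σ (n + 1) 1) 0 - (-1) ^ n := by
    intro n
    induction n with
    | zero => intro _; rw [hE00, hE01, hE02]; norm_num
    | succ k ih =>
      intro hk
      obtain ⟨h1, h2, h3⟩ := hstep k hk
      have ihk := ih (by omega)
      have hpow : ((-1 : ℤ)) ^ (k + 1) = -(-1) ^ k := by ring
      rw [h1, h2, h3, hpow]
      linarith [ihk]
  -- column sum identity
  have hsum : ∀ n,
      E n (σ (n + 1) 0) 0 + E n (σ (n + 1) 1) 0 + E n (σ (n + 1) 2) 0 = 2 * s n 0 + 1 := by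
    intro n
    have h := Equiv.sum_comp (σ (n + 1)) (fun r => E n r 0)
    rw [Fin.sum_univ_three, Fin.sum_univ_three] at h
    rw [h, hs]
    simp only [hEdef, addone_apply]
    norm_num [show ¬((1 : Fin 3) = 0) from by decide, show ¬((2 : Fin 3) = 0) from by decide]
    ring
  -- parity of mu
  have hmu : ∀ n, 2 * (mu n : ℤ) = 1 - (-1) ^ n := by
    intro n
    rcases Nat.even_or_odd n with h | h
    · rw [show mu n = 0 from by simp [mu, Nat.not_odd_iff_even.mpr h], h.neg_one_pow]
      norm_num
    · rw [show mu n = 1 from by simp [mu, h], h.neg_one_pow]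
      norm_num
  -- p n = x n + y n
  have hpxy : ∀ n, n ≤ m → p n = E n (σ (n + 1) 0) 0 + E n (σ (n + 1) 1) 0 := by
    intro n hn
    have h1 := hinv n hn
    have h2 := hsum n
    have h3 := hmu n
    rw [hp n]
    linarith
  refine ⟨?_, ?_, ?_⟩
  · rw [hpxy 0 (by omega), hE00, hE01]; norm_num
  · obtain ⟨h1, h2, h3⟩ := hstep 0 hm
    rw [hpxy 1 hm]
    show E (0 + 1) (σ (0 + 2) 0) 0 + E (0 + 1) (σ (0 + 2) 1) 0 = _
    rw [h1, h2, hE00, hE01, hE02]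
    ring
  · intro n h1 hn1
    obtain ⟨k, rfl⟩ : ∃ k, n = k + 1 := ⟨n - 1, by omega⟩
    have hk2 : k + 2 ≤ m := hn1
    obtain ⟨sa, sb, sc⟩ := hstep (k + 1) hk2
    obtain ⟨ta, tb, tc⟩ := hstep k (by omega)
    have invk1 := hinv (k + 1) (by omega)
    have invk := hinv k (by omega)
    have pk1 := hpxy (k + 1) (by omega)
    have pk := hpxy k (by omega)
    have pk2 := hpxy (k + 2) hk2
    have hpow : ((-1 : ℤ)) ^ (k + 1) = -(-1) ^ k := by ring
    rw [show k + 1 + 1 = k + 2 from rfl] at *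
    rw [show k + 1 - 1 = k from rfl]
    rw [pk2, sa, sb, pk1, pk]
    rw [hpow] at invk1
    rw [ta] at *
    nlinarith [invk1, invk]
end

section
/- The sequence q_n satisfies q_0 = 0, q_1 = 1, and the recurrence q_{n+1} = a_{n+1}·q_n + q_{n−1} for all 1 ≤ n ≤ m−1. -/
/- ### Auxiliary lemmas -/

lemma perm_sum3 (e : Equiv.Perm (Fin 3)) (f : Fin 3 → ℤ) :
    f (e 0) + f (e 1) + f (e 2) = f 0 + f 1 + f 2 := by
  have := Equiv.sum_comp e f
  simpa [Fin.sum_univ_three] using this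

lemma perm_delta (e : Equiv.Perm (Fin 3)) :
    (if e 0 = 2 then (1:ℤ) else 0) + (if e 1 = 2 then (1:ℤ) else 0)
      + (if e 2 = 2 then (1:ℤ) else 0) = 1 := by
  have := perm_sum3 e (fun r => if r = 2 then (1:ℤ) else 0)
  simpa using this

lemma mu_add (n : ℕ) : (mu n : ℤ) + (mu (n+1) : ℤ) = 1 := by
  rcases Nat.even_or_odd n with h | h
  · have h1 : Odd (n+1) := Even.add_one h
    have h2 : ¬ Odd n := (Nat.not_odd_iff_even).mpr h
    simp [mu, h1, h2]
  · have h2 : ¬ Odd (n+1) := (Nat.not_odd_iff_even).mpr (Odd.add_one h)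
    simp [mu, h, h2]

lemma DstepEntry (M N : Matrix (Fin 3) (Fin 3) ℤ) (r t : Fin 3) :
    (2 * M * N + N + M : Matrix (Fin 3) (Fin 3) ℤ) r t
      = 2 * (M r 0 * N 0 t + M r 1 * N 1 t + M r 2 * N 2 t) + N r t + M r t := by
  rw [show (2 : Matrix (Fin 3) (Fin 3) ℤ) * M = M + M from two_mul M]
  simp [Matrix.add_apply, Matrix.add_mul, Matrix.mul_apply, Fin.sum_univ_three]
  ring

lemma DstepEntry' (e : Equiv.Perm (Fin 3)) (M N : Matrix (Fin 3) (Fin 3) ℤ) (r t : Fin 3) :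
    (2 * M * N + N + M : Matrix (Fin 3) (Fin 3) ℤ) r t
      = 2 * (M r (e 0) * N (e 0) t + M r (e 1) * N (e 1) t + M r (e 2) * N (e 2) t)
        + N r t + M r t := by
  rw [DstepEntry]
  have := perm_sum3 e (fun c => M r c * N c t)
  linarith

lemma Mmat_row_i (aa : ℕ) {i j : Fin 3} (hij : i ≠ j) (t : Fin 3) :
    Mmat aa i j i t = (if t = i then 1 else 0) * ⌊(aa:ℚ)/2⌋
      + (if t = j then 1 else 0) * ⌈((aa:ℚ)-1)/2⌉ := by
  by_cases h1 : t = i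
  · simp [Mmat, h1, hij, (hij.symm : j ≠ i)]
  · by_cases h2 : t = j <;> simp [Mmat, h1, h2, hij, (hij.symm : j ≠ i)]

lemma Mmat_row_j (aa : ℕ) {i j : Fin 3} (hij : i ≠ j) (t : Fin 3) :
    Mmat aa i j j t = (if t = i then 1 else 0) * ⌈(aa:ℚ)/2⌉
      + (if t = j then 1 else 0) * ⌊((aa:ℚ)-1)/2⌋ := by
  by_cases h1 : t = i
  · simp [Mmat, h1, hij, (hij.symm : j ≠ i)]
  · by_cases h2 : t = j <;> simp [Mmat, h1, h2, hij, (hij.symm : j ≠ i)]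

lemma Mmat_row_k (aa : ℕ) {i j k : Fin 3} (hki : k ≠ i) (hkj : k ≠ j) (t : Fin 3) :
    Mmat aa i j k t = 0 := by
  simp [Mmat, hki, hkj]

lemma floor_ceil_even (h : ℕ) :
    ⌊((2*h:ℕ):ℚ)/2⌋ = (h:ℤ) ∧ ⌈(((2*h:ℕ):ℚ)-1)/2⌉ = (h:ℤ) ∧
    ⌈((2*h:ℕ):ℚ)/2⌉ = (h:ℤ) ∧ ⌊(((2*h:ℕ):ℚ)-1)/2⌋ = (h:ℤ)-1 := by
  refine ⟨?_, ?_, ?_, ?_⟩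
  · rw [Int.floor_eq_iff] <;> push_cast <;> constructor <;> linarith
  · rw [Int.ceil_eq_iff] <;> push_cast <;> constructor <;> linarith
  · rw [Int.ceil_eq_iff] <;> push_cast <;> constructor <;> linarith
  · rw [Int.floor_eq_iff] <;> push_cast <;> constructor <;> linarith

lemma floor_ceil_odd (h : ℕ) :
    ⌊((2*h+1:ℕ):ℚ)/2⌋ = (h:ℤ) ∧ ⌈(((2*h+1:ℕ):ℚ)-1)/2⌉ = (h:ℤ) ∧
    ⌈((2*h+1:ℕ):ℚ)/2⌉ = (h:ℤ)+1 ∧ ⌊(((2*h+1:ℕ):ℚ)-1)/2⌋ = ((h:ℤ)+1)-1 := by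
  refine ⟨?_, ?_, ?_, ?_⟩
  · rw [Int.floor_eq_iff] <;> push_cast <;> constructor <;> linarith
  · rw [Int.ceil_eq_iff] <;> push_cast <;> constructor <;> linarith
  · rw [Int.ceil_eq_iff] <;> push_cast <;> constructor <;> linarith
  · rw [Int.floor_eq_iff] <;> push_cast <;> constructor <;> linarith

/-- The three rows of the updated matrix `2 M D + D + M`, where the row/column
indices `i, j, k` are given by a permutation `e` of `Fin 3`. -/
lemma rows (aa : ℕ) (α β : ℤ)
    (h1 : ⌊(aa:ℚ)/2⌋ = α) (h2 : ⌈((aa:ℚ)-1)/2⌉ = α)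
    (h3 : ⌈(aa:ℚ)/2⌉ = β) (h4 : ⌊((aa:ℚ)-1)/2⌋ = β - 1)
    (e : Equiv.Perm (Fin 3)) (N : Matrix (Fin 3) (Fin 3) ℤ) (t : Fin 3) :
    ((2 * Mmat aa (e 0) (e 1) * N + N + Mmat aa (e 0) (e 1) : Matrix (Fin 3) (Fin 3) ℤ) (e 0) t
      = (2*α+1) * N (e 0) t + 2*α * N (e 1) t
        + α * ((if t = e 0 then 1 else 0) + (if t = e 1 then 1 else 0)))
    ∧ ((2 * Mmat aa (e 0) (e 1) * N + N + Mmat aa (e 0) (e 1) : Matrix (Fin 3) (Fin 3) ℤ) (e 1) t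
      = 2*β * N (e 0) t + (2*β-1) * N (e 1) t
        + β * (if t = e 0 then 1 else 0) + (β-1) * (if t = e 1 then 1 else 0))
    ∧ ((2 * Mmat aa (e 0) (e 1) * N + N + Mmat aa (e 0) (e 1) : Matrix (Fin 3) (Fin 3) ℤ) (e 2) t
      = N (e 2) t) := by
  have h01 : e 0 ≠ e 1 := e.injective.ne (by decide)
  have h20 : e 2 ≠ e 0 := e.injective.ne (by decide)
  have h21 : e 2 ≠ e 1 := e.injective.ne (by decide)
  refine ⟨?_, ?_, ?_⟩
  · rw [DstepEntry' e]
    rw [Mmat_row_i aa h01 (e 0), Mmat_row_i aa h01 (e 1), Mmat_row_i aa h01 (e 2),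
      Mmat_row_i aa h01 t, h1, h2]
    simp [h01, h01.symm, h20, h20.symm, h21, h21.symm]
    split_ifs <;> ring
  · rw [DstepEntry' e]
    rw [Mmat_row_j aa h01 (e 0), Mmat_row_j aa h01 (e 1), Mmat_row_j aa h01 (e 2),
      Mmat_row_j aa h01 t, h3, h4]
    simp [h01, h01.symm, h20, h20.symm, h21, h21.symm]
    split_ifs <;> ring
  · rw [DstepEntry' e]
    rw [Mmat_row_k aa h20 h21 (e 0), Mmat_row_k aa h20 h21 (e 1), Mmat_row_k aa h20 h21 (e 2),
      Mmat_row_k aa h20 h21 t]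
    ring

theorem q_recurrence
    (m : ℕ) (hm : 1 ≤ m) (a : ℕ → ℕ)
    (ha : ∀ n, 1 ≤ n → n ≤ m → 0 < a n)
    (σ : ℕ → Equiv.Perm (Fin 3))
    (hσ1 : σ 1 = 1)
    (hσ : ∀ n, 1 ≤ n → n ≤ m →
      σ (n + 1) = if Even (a n) then σ n * trans13 else σ n * cyc132)
    (D : ℕ → Matrix (Fin 3) (Fin 3) ℤ)
    (hD0 : D 0 = 0)
    (hD : ∀ n, n + 1 ≤ m →
      D (n + 1) = 2 * Mmat (a (n + 1)) (σ (n + 1) 0) (σ (n + 1) 1) * D n + D n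
        + Mmat (a (n + 1)) (σ (n + 1) 0) (σ (n + 1) 1))
    (s : ℕ → Fin 3 → ℤ)
    (hs : ∀ n t, s n t = D n 0 t + D n 1 t + D n 2 t)
    (p q : ℕ → ℤ)
    (hp : ∀ n, p n = s n 0 + 1 - (mu n : ℤ))
    (hq : ∀ n, q n = s n 2 + (mu n : ℤ))
 :
    q 0 = 0 ∧ q 1 = 1 ∧
      ∀ n, 1 ≤ n → n + 1 ≤ m →
        q (n + 1) = (a (n + 1) : ℤ) * q n + q (n - 1) := by
  have hq0 : q 0 = 0 := by rw [hq, hs, hD0]; simp [mu]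
  have hD1 : D 1 = Mmat (a 1) 0 1 := by
    have h := hD 0 hm
    rw [hD0] at h
    simpa [hσ1] using h
  have hz1 : ∀ r, D 1 r 2 = 0 := by
    intro r; rw [hD1]; simp [Mmat]
  have hq1 : q 1 = 1 := by
    rw [hq, hs, hz1, hz1, hz1]
    norm_num [mu]
  refine ⟨hq0, hq1, ?_⟩
  -- the key invariant
  have key : ∀ n, 1 ≤ n → n ≤ m →
      (D n (σ (n+1) 2) 2 - D n (σ (n+1) 0) 2 - D n (σ (n+1) 1) 2
        = 1 - (if σ (n+1) 2 = 2 then (1:ℤ) else 0) - (mu n : ℤ))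
      ∧ (D n (σ (n+1) 0) 2 - D n (σ (n+1) 1) 2 + D n (σ (n+1) 2) 2
        = q (n-1) - (mu (n-1) : ℤ) + (if σ (n+1) 1 = 2 then (1:ℤ) else 0)) := by
    intro n hn
    induction n, hn using Nat.le_induction with
    | base =>
      intro h1m
      have hσ2 := hσ 1 le_rfl h1m
      rw [hσ1] at hσ2; simp only [one_mul] at hσ2
      by_cases hpar : Even (a 1)
      · rw [if_pos hpar] at hσ2
        rw [hσ2]
        have e0 : trans13 0 = 2 := by decide
        have e1 : trans13 1 = 1 := by decide
        have e2 : trans13 2 = 0 := by decide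
        rw [e0, e1, e2]
        simp [hz1, hq0, mu, Fin.ext_iff]
      · rw [if_neg hpar] at hσ2
        rw [hσ2]
        have e0 : cyc132 0 = 2 := by decide
        have e1 : cyc132 1 = 0 := by decide
        have e2 : cyc132 2 = 1 := by decide
        rw [e0, e1, e2]
        simp [hz1, hq0, mu, Fin.ext_iff]
    | succ n hn ih =>
      intro hn1m
      have hnm : n ≤ m := Nat.le_of_succ_le hn1m
      obtain ⟨hB, hC⟩ := ih hnm
      have hDn1 := hD n hn1m
      have hσn2 := hσ (n+1) (Nat.le_add_left 1 n) hn1m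
      have hqn : q n = D n (σ (n+1) 0) 2 + D n (σ (n+1) 1) 2 + D n (σ (n+1) 2) 2 + (mu n : ℤ) := by
        rw [hq, hs]
        have := perm_sum3 (σ (n+1)) (fun r => D n r 2)
        linarith
      have hdelta := perm_delta (σ (n+1))
      have hE : D n (σ (n+1) 0) 2 + D n (σ (n+1) 1) 2 - D n (σ (n+1) 2) 2
          + (if σ (n+1) 0 = 2 then (1:ℤ) else 0) + (if σ (n+1) 1 = 2 then (1:ℤ) else 0)
          - (mu n : ℤ) = 0 := by linarith
      have hmu2 : (mu n : ℤ) + (mu (n+1) : ℤ) = 1 := mu_add n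
      simp only [Nat.add_sub_cancel]
      rcases Nat.even_or_odd (a (n+1)) with hpar | hpar
      · -- even step
        obtain ⟨h, hh⟩ := hpar
        have hh' : a (n+1) = 2*h := by omega
        obtain ⟨f1, f2, f3, f4⟩ := floor_ceil_even h
        rw [← hh'] at f1 f2 f3 f4
        have hr := rows (a (n+1)) (h:ℤ) (h:ℤ) f1 f2 f3 (by rw [f4]) (σ (n+1)) (D n) 2
        rw [← hDn1] at hr
        obtain ⟨hI, hJ, hK⟩ := hr
        simp only [@eq_comm (Fin 3) 2] at hI hJ
        have hpar' : Even (a (n+1)) := ⟨h, by omega⟩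
        rw [if_pos hpar'] at hσn2
        have g0 : σ (n+1+1) 0 = σ (n+1) 2 := by
          rw [hσn2, Equiv.Perm.mul_apply, show trans13 0 = 2 from by decide]
        have g1 : σ (n+1+1) 1 = σ (n+1) 1 := by
          rw [hσn2, Equiv.Perm.mul_apply, show trans13 1 = 1 from by decide]
        have g2 : σ (n+1+1) 2 = σ (n+1) 0 := by
          rw [hσn2, Equiv.Perm.mul_apply, show trans13 2 = 0 from by decide]
        rw [g0, g1, g2]
        constructor
        · linarith
        · rw [hqn]; linarith
      · -- odd step
        obtain ⟨h, hh⟩ := hpar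
        obtain ⟨f1, f2, f3, f4⟩ := floor_ceil_odd h
        rw [← hh] at f1 f2 f3 f4
        have hr := rows (a (n+1)) (h:ℤ) ((h:ℤ)+1) f1 f2 f3 f4 (σ (n+1)) (D n) 2
        rw [← hDn1] at hr
        obtain ⟨hI, hJ, hK⟩ := hr
        simp only [@eq_comm (Fin 3) 2] at hI hJ
        have hpar' : ¬ Even (a (n+1)) := by
          rw [← Nat.not_odd_iff_even]; push_neg; exact ⟨h, hh⟩
        rw [if_neg hpar'] at hσn2
        have g0 : σ (n+1+1) 0 = σ (n+1) 2 := by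
          rw [hσn2, Equiv.Perm.mul_apply, show cyc132 0 = 2 from by decide]
        have g1 : σ (n+1+1) 1 = σ (n+1) 0 := by
          rw [hσn2, Equiv.Perm.mul_apply, show cyc132 1 = 0 from by decide]
        have g2 : σ (n+1+1) 2 = σ (n+1) 1 := by
          rw [hσn2, Equiv.Perm.mul_apply, show cyc132 2 = 1 from by decide]
        rw [g0, g1, g2]
        constructor
        · linarith
        · rw [hqn]; linarith
  -- the final recurrence
  intro n hn hn1m
  have hnm : n ≤ m := Nat.le_of_succ_le hn1m
  obtain ⟨hB, hC⟩ := key n hn hnm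
  have hDn1 := hD n hn1m
  have hqn : q n = D n (σ (n+1) 0) 2 + D n (σ (n+1) 1) 2 + D n (σ (n+1) 2) 2 + (mu n : ℤ) := by
    rw [hq, hs]
    have := perm_sum3 (σ (n+1)) (fun r => D n r 2)
    linarith
  have hqn1 : q (n+1) = D (n+1) (σ (n+1) 0) 2 + D (n+1) (σ (n+1) 1) 2
      + D (n+1) (σ (n+1) 2) 2 + (mu (n+1) : ℤ) := by
    rw [hq, hs]
    have := perm_sum3 (σ (n+1)) (fun r => D (n+1) r 2)
    linarith
  have hdelta := perm_delta (σ (n+1))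
  have hE : D n (σ (n+1) 0) 2 + D n (σ (n+1) 1) 2 - D n (σ (n+1) 2) 2
      + (if σ (n+1) 0 = 2 then (1:ℤ) else 0) + (if σ (n+1) 1 = 2 then (1:ℤ) else 0)
      - (mu n : ℤ) = 0 := by linarith
  have hmu : (mu (n+1) : ℤ) = (mu (n-1) : ℤ) := by
    have h1 := mu_add n
    have h2 := mu_add (n-1)
    rw [Nat.sub_add_cancel hn] at h2
    linarith
  rcases Nat.even_or_odd (a (n+1)) with hpar | hpar
  · obtain ⟨h, hh⟩ := hpar
    have hh' : a (n+1) = 2*h := by omega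
    obtain ⟨f1, f2, f3, f4⟩ := floor_ceil_even h
    rw [← hh'] at f1 f2 f3 f4
    have hr := rows (a (n+1)) (h:ℤ) (h:ℤ) f1 f2 f3 (by rw [f4]) (σ (n+1)) (D n) 2
    rw [← hDn1] at hr
    obtain ⟨hI, hJ, hK⟩ := hr
    simp only [@eq_comm (Fin 3) 2] at hI hJ
    have hA : ((a (n+1) : ℕ) : ℤ) = 2*(h:ℤ) := by exact_mod_cast congrArg (Nat.cast : ℕ → ℤ) hh'
    rw [hA]
    linear_combination hqn1 + hI + hJ + hK + hC + hmu - (2*(h:ℤ)) * hqn + (2*(h:ℤ)) * hE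
  · obtain ⟨h, hh⟩ := hpar
    obtain ⟨f1, f2, f3, f4⟩ := floor_ceil_odd h
    rw [← hh] at f1 f2 f3 f4
    have hr := rows (a (n+1)) (h:ℤ) ((h:ℤ)+1) f1 f2 f3 f4 (σ (n+1)) (D n) 2
    rw [← hDn1] at hr
    obtain ⟨hI, hJ, hK⟩ := hr
    simp only [@eq_comm (Fin 3) 2] at hI hJ
    have hA : ((a (n+1) : ℕ) : ℤ) = 2*(h:ℤ)+1 := by exact_mod_cast congrArg (Nat.cast : ℕ → ℤ) hh
    rw [hA]
    linear_combination hqn1 + hI + hJ + hK + hC + hmu - (2*(h:ℤ)+1) * hqn + (2*(h:ℤ)+1) * hE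
end

section
/- Let P_n and Q_n be the standard convergent numerator and denominator sequences of the continued fraction [a_1, …, a_m], i.e. P_0 = 1, P_1 = a_1, P_{n+1} = a_{n+1}·P_n + P_{n−1} and Q_0 = 0, Q_1 = 1, Q_{n+1} = a_{n+1}·Q_n + Q_{n−1} for 1 ≤ n ≤ m−1. Then p_n = P_n and q_n = Q_n for all 0 ≤ n ≤ m; in particular p_m/q_m is the value of the continued fraction [a_1, …, a_m]. -/
/-- The value of the continued fraction `[x₁, …, xₖ]` as a rational number. -/
def cfVal : List ℕ → ℚ
  | [] => 0
  | [x] => (x : ℚ)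
  | x :: xs => (x : ℚ) + 1 / cfVal xs

-- ### auxiliary lemmas

lemma qhalf (c : ℤ) : ((c:ℚ))/2 = ((c:ℚ))/((2:ℕ):ℚ) := by
  have : ((2:ℕ):ℚ) = (2:ℚ) := by norm_num
  rw [this]

lemma fl (c : ℤ) : ⌊((c:ℚ))/2⌋ = c / 2 := by
  rw [qhalf, Rat.floor_intCast_div_natCast]
  norm_num

lemma ce (c : ℤ) : ⌈((c:ℚ))/2⌉ = -((-c) / 2) := by
  rw [show (((c:ℚ))/2) = -((((-c:ℤ)):ℚ)/2) by push_cast; ring, Int.ceil_neg, fl]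

lemma fl_even1 (k : ℕ) : ⌊((2*k:ℕ):ℚ)/2⌋ = (k:ℤ) := by
  rw [show ((2*k:ℕ):ℚ) = ((2*k:ℤ):ℚ) by push_cast; ring, fl]; omega
lemma ce_even2 (k : ℕ) : ⌈(((2*k:ℕ):ℚ)-1)/2⌉ = (k:ℤ) := by
  rw [show ((2*k:ℕ):ℚ)-1 = ((2*k-1:ℤ):ℚ) by push_cast; ring, ce]; omega
lemma ce_even3 (k : ℕ) : ⌈((2*k:ℕ):ℚ)/2⌉ = (k:ℤ) := by
  rw [show ((2*k:ℕ):ℚ) = ((2*k:ℤ):ℚ) by push_cast; ring, ce]; omega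
lemma fl_even4 (k : ℕ) : ⌊(((2*k:ℕ):ℚ)-1)/2⌋ = (k:ℤ)-1 := by
  rw [show ((2*k:ℕ):ℚ)-1 = ((2*k-1:ℤ):ℚ) by push_cast; ring, fl]; omega
lemma fl_odd1 (k : ℕ) : ⌊((2*k+1:ℕ):ℚ)/2⌋ = (k:ℤ) := by
  rw [show ((2*k+1:ℕ):ℚ) = ((2*k+1:ℤ):ℚ) by push_cast; ring, fl]; omega
lemma ce_odd2 (k : ℕ) : ⌈(((2*k+1:ℕ):ℚ)-1)/2⌉ = (k:ℤ) := by
  rw [show ((2*k+1:ℕ):ℚ)-1 = ((2*k:ℤ):ℚ) by push_cast; ring, ce]; omega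
lemma ce_odd3 (k : ℕ) : ⌈((2*k+1:ℕ):ℚ)/2⌉ = (k:ℤ)+1 := by
  rw [show ((2*k+1:ℕ):ℚ) = ((2*k+1:ℤ):ℚ) by push_cast; ring, ce]; omega
lemma fl_odd4 (k : ℕ) : ⌊(((2*k+1:ℕ):ℚ)-1)/2⌋ = (k:ℤ) := by
  rw [show ((2*k+1:ℕ):ℚ)-1 = ((2*k:ℤ):ℚ) by push_cast; ring, fl]; omega

lemma Mmat_even (k : ℕ) (i j : Fin 3) :
    Mmat (2*k) i j = Matrix.of fun r t =>
      if r = i ∧ t = i then (k:ℤ) else if r = i ∧ t = j then (k:ℤ)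
      else if r = j ∧ t = i then (k:ℤ) else if r = j ∧ t = j then (k:ℤ)-1 else 0 := by
  ext r t
  simp only [Mmat, Matrix.of_apply, fl_even1, ce_even2, ce_even3, fl_even4]

lemma Mmat_odd (k : ℕ) (i j : Fin 3) :
    Mmat (2*k+1) i j = Matrix.of fun r t =>
      if r = i ∧ t = i then (k:ℤ) else if r = i ∧ t = j then (k:ℤ)
      else if r = j ∧ t = i then (k:ℤ)+1 else if r = j ∧ t = j then (k:ℤ) else 0 := by
  ext r t
  simp only [Mmat, Matrix.of_apply, fl_odd1, ce_odd2, ce_odd3, fl_odd4]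

lemma two_mul_add_one_apply (X : Matrix (Fin 3) (Fin 3) ℤ) (r t : Fin 3) :
    (2 * X + 1 : Matrix (Fin 3) (Fin 3) ℤ) r t = 2 * X r t + if r = t then 1 else 0 := by
  rw [two_mul, two_mul]
  simp [Matrix.add_apply, Matrix.one_apply]

/-- ε_n = (-1)^n written via `mu`. -/
def eps (n : ℕ) : ℤ := 1 - 2 * (mu n : ℤ)

lemma mu_succ (n : ℕ) : (mu (n+1) : ℤ) = 1 - (mu n : ℤ) := by
  rcases Nat.even_or_odd n with h | h
  · have h1 : ¬ Odd n := Nat.not_odd_iff_even.mpr h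
    have h2 : Odd (n+1) := Even.add_one h
    simp [mu, h1, h2]
  · have h2 : ¬ Odd (n+1) := Nat.not_odd_iff_even.mpr (Odd.add_one h)
    simp [mu, h, h2]

lemma eps_succ (n : ℕ) : eps (n+1) = - eps n := by
  simp [eps, mu_succ]; ring

lemma eps_one : eps 1 = -1 := by simp [eps, mu]
lemma mu_zero : (mu 0 : ℤ) = 0 := by simp [mu]
lemma mu_one : (mu 1 : ℤ) = 1 := by simp [mu]

lemma cfVal_cons (x : ℕ) (xs : List ℕ) (h : xs ≠ []) :
    cfVal (x :: xs) = (x:ℚ) + 1 / cfVal xs := by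
  match xs with
  | [] => simp at h
  | y :: t => rfl

lemma cfVal_pos : ∀ (l : List ℕ), l ≠ [] → (∀ x ∈ l, 0 < x) → 0 < cfVal l := by
  intro l
  induction l with
  | nil => simp
  | cons x xs ih =>
    intro _ h
    have hx : (1:ℚ) ≤ (x:ℚ) := by exact_mod_cast h x (by simp)
    rcases eq_or_ne xs [] with rfl | hne
    · show (0:ℚ) < cfVal [x]
      show (0:ℚ) < (x:ℚ)
      linarith
    · rw [cfVal_cons x xs hne]
      have ht := ih hne (fun z hz => h z (by simp [hz]))
      have : 0 < 1 / cfVal xs := by positivity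
      linarith
theorem pq_are_convergents
    (m : ℕ) (hm : 1 ≤ m) (a : ℕ → ℕ)
    (ha : ∀ n, 1 ≤ n → n ≤ m → 0 < a n)
    (σ : ℕ → Equiv.Perm (Fin 3))
    (hσ1 : σ 1 = 1)
    (hσ : ∀ n, 1 ≤ n → n ≤ m →
      σ (n + 1) = if Even (a n) then σ n * trans13 else σ n * cyc132)
    (D : ℕ → Matrix (Fin 3) (Fin 3) ℤ)
    (hD0 : D 0 = 0)
    (hD : ∀ n, n + 1 ≤ m →
      D (n + 1) = 2 * Mmat (a (n + 1)) (σ (n + 1) 0) (σ (n + 1) 1) * D n + D n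
        + Mmat (a (n + 1)) (σ (n + 1) 0) (σ (n + 1) 1))
    (s : ℕ → Fin 3 → ℤ)
    (hs : ∀ n t, s n t = D n 0 t + D n 1 t + D n 2 t)
    (p q : ℕ → ℤ)
    (hp : ∀ n, p n = s n 0 + 1 - (mu n : ℤ))
    (hq : ∀ n, q n = s n 2 + (mu n : ℤ))
    (P Q : ℕ → ℤ)
    (hP0 : P 0 = 1) (hP1 : P 1 = (a 1 : ℤ))
    (hP : ∀ n, 1 ≤ n → n + 1 ≤ m →
      P (n + 1) = (a (n + 1) : ℤ) * P n + P (n - 1))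
    (hQ0 : Q 0 = 0) (hQ1 : Q 1 = 1)
    (hQ : ∀ n, 1 ≤ n → n + 1 ≤ m →
      Q (n + 1) = (a (n + 1) : ℤ) * Q n + Q (n - 1)) :
    (∀ n ≤ m, p n = P n ∧ q n = Q n) ∧
      (p m : ℚ) / (q m : ℚ) = cfVal ((List.range' 1 m).map a) := by
  have perm_sum : ∀ (g : Equiv.Perm (Fin 3)) (f : Fin 3 → ℤ),
      f (g 0) + f (g 1) + f (g 2) = f 0 + f 1 + f 2 := by
    intro g f
    have h := Equiv.sum_comp g f
    simpa [Fin.sum_univ_three] using h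
  have hEstep : ∀ n, n + 1 ≤ m →
      (2 * D (n+1) + 1 : Matrix (Fin 3) (Fin 3) ℤ)
        = (2 * Mmat (a (n+1)) (σ (n+1) 0) (σ (n+1) 1) + 1) * (2 * D n + 1) := by
    intro n h
    rw [hD n h]; noncomm_ring
  have mulapp : ∀ (N X : Matrix (Fin 3) (Fin 3) ℤ) (g : Equiv.Perm (Fin 3)) (r t : Fin 3),
      (N * X) r t = N r (g 0) * X (g 0) t + N r (g 1) * X (g 1) t + N r (g 2) * X (g 2) t := by
    intro N X g r t
    rw [Matrix.mul_apply, Fin.sum_univ_three]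
    exact (perm_sum g fun c => N r c * X c t).symm
  -- the main invariant
  have key : ∀ n, 1 ≤ n → n ≤ m →
      ((2 * D n + 1 : Matrix (Fin 3) (Fin 3) ℤ) (σ (n+1) 0) 0 = P (n-1) + eps n
    ∧ (2 * D n + 1 : Matrix (Fin 3) (Fin 3) ℤ) (σ (n+1) 0) 1 = P (n-1) - Q (n-1) + eps n
    ∧ (2 * D n + 1 : Matrix (Fin 3) (Fin 3) ℤ) (σ (n+1) 0) 2 = Q (n-1) - eps n
    ∧ (2 * D n + 1 : Matrix (Fin 3) (Fin 3) ℤ) (σ (n+1) 1) 0 = P n - P (n-1) - eps n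
    ∧ (2 * D n + 1 : Matrix (Fin 3) (Fin 3) ℤ) (σ (n+1) 1) 1
        = (P n - P (n-1)) - (Q n - Q (n-1)) - eps n
    ∧ (2 * D n + 1 : Matrix (Fin 3) (Fin 3) ℤ) (σ (n+1) 1) 2 = Q n - Q (n-1) + eps n
    ∧ (2 * D n + 1 : Matrix (Fin 3) (Fin 3) ℤ) (σ (n+1) 2) 0 = P n - eps n
    ∧ (2 * D n + 1 : Matrix (Fin 3) (Fin 3) ℤ) (σ (n+1) 2) 1 = P n - Q n - eps n
    ∧ (2 * D n + 1 : Matrix (Fin 3) (Fin 3) ℤ) (σ (n+1) 2) 2 = Q n + eps n) := by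
    intro n
    induction n with
    | zero => omega
    | succ n ih =>
      intro _ hle
      rcases Nat.eq_zero_or_pos n with rfl | hn1
      · -- base case n = 1
        have hD1 : D 1 = Mmat (a 1) 0 1 := by
          have h := hD 0 (by omega)
          rw [hD0] at h
          simpa [hσ1] using h
        have hσ2 := hσ 1 (by omega) hm
        rw [hσ1, one_mul, one_mul] at hσ2
        have ha1 := ha 1 (by omega) hm
        rcases Nat.even_or_odd (a 1) with he | ho
        · obtain ⟨k, hk⟩ := he
          have hk2 : a 1 = 2 * k := by omega
          have hσ2' : σ 2 = trans13 := by rw [hσ2, if_pos ⟨k, hk⟩]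
          have e0 : σ 2 0 = 2 := by rw [hσ2']; rfl
          have e1 : σ 2 1 = 1 := by rw [hσ2']; rfl
          have e2 : σ 2 2 = 0 := by rw [hσ2']; rfl
          refine ⟨?_, ?_, ?_, ?_, ?_, ?_, ?_, ?_, ?_⟩ <;>
            rw [two_mul_add_one_apply] <;>
            simp [e0, e1, e2, hD1, hk2, Mmat_even, hP0, hP1, hQ0, hQ1, eps_one] <;>
            push_cast <;>
            omega
        · obtain ⟨k, hk⟩ := ho
          have hσ2' : σ 2 = cyc132 := by
            rw [hσ2, if_neg (by simp [Nat.even_iff, Nat.odd_iff.mp ⟨k, hk⟩])]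
          have e0 : σ 2 0 = 2 := by rw [hσ2']; rfl
          have e1 : σ 2 1 = 0 := by rw [hσ2']; rfl
          have e2 : σ 2 2 = 1 := by rw [hσ2']; rfl
          refine ⟨?_, ?_, ?_, ?_, ?_, ?_, ?_, ?_, ?_⟩ <;>
            rw [two_mul_add_one_apply] <;>
            simp [e0, e1, e2, hD1, hk, Mmat_odd, hP0, hP1, hQ0, hQ1, eps_one] <;>
            push_cast <;>
            omega
      · -- inductive step
        obtain ⟨h1, h2, h3, h4, h5, h6, h7, h8, h9⟩ := ih (by omega) (by omega)
        have hinj := (σ (n+1)).injective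
        have hIJ : σ (n+1) 0 ≠ σ (n+1) 1 := fun h => absurd (hinj h) (by decide)
        have hIK : σ (n+1) 0 ≠ σ (n+1) 2 := fun h => absurd (hinj h) (by decide)
        have hJK : σ (n+1) 1 ≠ σ (n+1) 2 := fun h => absurd (hinj h) (by decide)
        have hJI := hIJ.symm
        have hKI := hIK.symm
        have hKJ := hJK.symm
        have hσ2 := hσ (n+1) (by omega) hle
        set N : Matrix (Fin 3) (Fin 3) ℤ
          := 2 * Mmat (a (n+1)) (σ (n+1) 0) (σ (n+1) 1) + 1 with hN
        have hmul : ∀ r t, (2 * D (n+1) + 1 : Matrix (Fin 3) (Fin 3) ℤ) r t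
            = N r (σ (n+1) 0) * (2 * D n + 1 : Matrix (Fin 3) (Fin 3) ℤ) (σ (n+1) 0) t
            + N r (σ (n+1) 1) * (2 * D n + 1 : Matrix (Fin 3) (Fin 3) ℤ) (σ (n+1) 1) t
            + N r (σ (n+1) 2) * (2 * D n + 1 : Matrix (Fin 3) (Fin 3) ℤ) (σ (n+1) 2) t := by
          intro r t
          rw [hEstep n hle, mulapp _ _ (σ (n+1))]
        have hPr : P (n+1) = (a (n+1):ℤ) * P n + P (n-1) := hP n hn1 hle
        have hQr : Q (n+1) = (a (n+1):ℤ) * Q n + Q (n-1) := hQ n hn1 hle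
        have hen : eps (n+1) = - eps n := eps_succ n
        have hb := ha (n+1) (by omega) (by omega)
        simp only [Nat.add_sub_cancel]
        rcases Nat.even_or_odd (a (n+1)) with he | ho
        · obtain ⟨k, hk⟩ := he
          have hk2 : a (n+1) = 2 * k := by omega
          have hσ2' : σ (n+2) = σ (n+1) * trans13 := by rw [hσ2, if_pos ⟨k, hk⟩]
          have e0 : σ (n+2) 0 = σ (n+1) 2 := by rw [hσ2']; rfl
          have e1 : σ (n+2) 1 = σ (n+1) 1 := by rw [hσ2']; rfl
          have e2 : σ (n+2) 2 = σ (n+1) 0 := by rw [hσ2']; rfl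
          have NII : N (σ (n+1) 0) (σ (n+1) 0) = 2*(k:ℤ)+1 := by
            rw [hN, two_mul_add_one_apply]; simp [hk2, Mmat_even, hIJ]
          have NIJ : N (σ (n+1) 0) (σ (n+1) 1) = 2*(k:ℤ) := by
            rw [hN, two_mul_add_one_apply]; simp [hk2, Mmat_even, hIJ, hJI]
          have NIK : N (σ (n+1) 0) (σ (n+1) 2) = 0 := by
            rw [hN, two_mul_add_one_apply]; simp [hk2, Mmat_even, hIK, hKI, hKJ]
          have NJI : N (σ (n+1) 1) (σ (n+1) 0) = 2*(k:ℤ) := by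
            rw [hN, two_mul_add_one_apply]; simp [hk2, Mmat_even, hIJ, hJI]
          have NJJ : N (σ (n+1) 1) (σ (n+1) 1) = 2*(k:ℤ)-1 := by
            rw [hN, two_mul_add_one_apply]; simp [hk2, Mmat_even, hIJ, hJI]; ring
          have NJK : N (σ (n+1) 1) (σ (n+1) 2) = 0 := by
            rw [hN, two_mul_add_one_apply]; simp [hk2, Mmat_even, hJK, hKI, hKJ, hJI]
          have NKI : N (σ (n+1) 2) (σ (n+1) 0) = 0 := by
            rw [hN, two_mul_add_one_apply]; simp [hk2, Mmat_even, hKI, hKJ, hIK]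
          have NKJ : N (σ (n+1) 2) (σ (n+1) 1) = 0 := by
            rw [hN, two_mul_add_one_apply]; simp [hk2, Mmat_even, hKI, hKJ, hJK]
          have NKK : N (σ (n+1) 2) (σ (n+1) 2) = 1 := by
            rw [hN, two_mul_add_one_apply]; simp [hk2, Mmat_even, hKI, hKJ]
          refine ⟨?_, ?_, ?_, ?_, ?_, ?_, ?_, ?_, ?_⟩
          · rw [e0, hmul, NKI, NKJ, NKK, h1, h4, h7, hen]; ring
          · rw [e0, hmul, NKI, NKJ, NKK, h2, h5, h8, hen]; ring
          · rw [e0, hmul, NKI, NKJ, NKK, h3, h6, h9, hen]; ring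
          · rw [e1, hmul, NJI, NJJ, NJK, h1, h4, h7, hen, hPr, hk2]; push_cast; ring
          · rw [e1, hmul, NJI, NJJ, NJK, h2, h5, h8, hen, hPr, hQr, hk2]; push_cast; ring
          · rw [e1, hmul, NJI, NJJ, NJK, h3, h6, h9, hen, hQr, hk2]; push_cast; ring
          · rw [e2, hmul, NII, NIJ, NIK, h1, h4, h7, hen, hPr, hk2]; push_cast; ring
          · rw [e2, hmul, NII, NIJ, NIK, h2, h5, h8, hen, hPr, hQr, hk2]; push_cast; ring
          · rw [e2, hmul, NII, NIJ, NIK, h3, h6, h9, hen, hQr, hk2]; push_cast; ring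
        · obtain ⟨k, hk⟩ := ho
          have hσ2' : σ (n+2) = σ (n+1) * cyc132 := by
            rw [hσ2, if_neg (by simp [Nat.even_iff, Nat.odd_iff.mp ⟨k, hk⟩])]
          have e0 : σ (n+2) 0 = σ (n+1) 2 := by rw [hσ2']; rfl
          have e1 : σ (n+2) 1 = σ (n+1) 0 := by rw [hσ2']; rfl
          have e2 : σ (n+2) 2 = σ (n+1) 1 := by rw [hσ2']; rfl
          have NII : N (σ (n+1) 0) (σ (n+1) 0) = 2*(k:ℤ)+1 := by
            rw [hN, two_mul_add_one_apply]; simp [hk, Mmat_odd, hIJ]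
          have NIJ : N (σ (n+1) 0) (σ (n+1) 1) = 2*(k:ℤ) := by
            rw [hN, two_mul_add_one_apply]; simp [hk, Mmat_odd, hIJ, hJI]
          have NIK : N (σ (n+1) 0) (σ (n+1) 2) = 0 := by
            rw [hN, two_mul_add_one_apply]; simp [hk, Mmat_odd, hIK, hKI, hKJ]
          have NJI : N (σ (n+1) 1) (σ (n+1) 0) = 2*(k:ℤ)+2 := by
            rw [hN, two_mul_add_one_apply]; simp [hk, Mmat_odd, hIJ, hJI]; ring
          have NJJ : N (σ (n+1) 1) (σ (n+1) 1) = 2*(k:ℤ)+1 := by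
            rw [hN, two_mul_add_one_apply]; simp [hk, Mmat_odd, hIJ, hJI]
          have NJK : N (σ (n+1) 1) (σ (n+1) 2) = 0 := by
            rw [hN, two_mul_add_one_apply]; simp [hk, Mmat_odd, hJK, hKI, hKJ, hJI]
          have NKI : N (σ (n+1) 2) (σ (n+1) 0) = 0 := by
            rw [hN, two_mul_add_one_apply]; simp [hk, Mmat_odd, hKI, hKJ, hIK]
          have NKJ : N (σ (n+1) 2) (σ (n+1) 1) = 0 := by
            rw [hN, two_mul_add_one_apply]; simp [hk, Mmat_odd, hKI, hKJ, hJK]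
          have NKK : N (σ (n+1) 2) (σ (n+1) 2) = 1 := by
            rw [hN, two_mul_add_one_apply]; simp [hk, Mmat_odd, hKI, hKJ]
          refine ⟨?_, ?_, ?_, ?_, ?_, ?_, ?_, ?_, ?_⟩
          · rw [e0, hmul, NKI, NKJ, NKK, h1, h4, h7, hen]; ring
          · rw [e0, hmul, NKI, NKJ, NKK, h2, h5, h8, hen]; ring
          · rw [e0, hmul, NKI, NKJ, NKK, h3, h6, h9, hen]; ring
          · rw [e1, hmul, NII, NIJ, NIK, h1, h4, h7, hen, hPr, hk]; push_cast; ring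
          · rw [e1, hmul, NII, NIJ, NIK, h2, h5, h8, hen, hPr, hQr, hk]; push_cast; ring
          · rw [e1, hmul, NII, NIJ, NIK, h3, h6, h9, hen, hQr, hk]; push_cast; ring
          · rw [e2, hmul, NJI, NJJ, NJK, h1, h4, h7, hen, hPr, hk]; push_cast; ring
          · rw [e2, hmul, NJI, NJJ, NJK, h2, h5, h8, hen, hPr, hQr, hk]; push_cast; ring
          · rw [e2, hmul, NJI, NJJ, NJK, h3, h6, h9, hen, hQr, hk]; push_cast; ring
  -- first conclusion
  have pq : ∀ n ≤ m, p n = P n ∧ q n = Q n := by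
    intro n hnm
    rcases Nat.eq_zero_or_pos n with rfl | hn1
    · constructor
      · rw [hp, hs, hD0, hP0]; simp [mu]
      · rw [hq, hs, hD0, hQ0]; simp [mu]
    · obtain ⟨h1, h2, h3, h4, h5, h6, h7, h8, h9⟩ := key n hn1 hnm
      have heps : eps n = 1 - 2 * (mu n : ℤ) := rfl
      constructor
      · have hsum := perm_sum (σ (n+1))
          (fun r => (2 * D n + 1 : Matrix (Fin 3) (Fin 3) ℤ) r 0)
        rw [h1, h4, h7, two_mul_add_one_apply, two_mul_add_one_apply,
          two_mul_add_one_apply] at hsum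
        simp only [show ((0:Fin 3) = 0) = True by simp, show ((1:Fin 3) = 0) = False by simp,
          show ((2:Fin 3) = 0) = False by simp, if_true, if_false] at hsum
        rw [hp, hs]
        omega
      · have hsum := perm_sum (σ (n+1))
          (fun r => (2 * D n + 1 : Matrix (Fin 3) (Fin 3) ℤ) r 2)
        rw [h3, h6, h9, two_mul_add_one_apply, two_mul_add_one_apply,
          two_mul_add_one_apply] at hsum
        simp only [show ((0:Fin 3) = 2) = False by simp, show ((1:Fin 3) = 2) = False by simp,
          show ((2:Fin 3) = 2) = True by simp, if_true, if_false] at hsum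
        rw [hq, hs]
        omega
  refine ⟨pq, ?_⟩
  -- positivity of Q
  have hQge : ∀ n, n ≤ m → 0 ≤ Q n ∧ (1 ≤ n → 0 < Q n) := by
    intro n
    induction n using Nat.strong_induction_on with
    | _ n ih =>
      intro hnm
      match n with
      | 0 => rw [hQ0]; omega
      | 1 => rw [hQ1]; omega
      | (n+2) =>
        have h1 := ih (n+1) (by omega) (by omega)
        have h0 := ih n (by omega) (by omega)
        have hr := hQ (n+1) (by omega) (by omega)
        simp only [Nat.add_sub_cancel] at hr
        have haa : (1:ℤ) ≤ (a (n+2) : ℤ) := by exact_mod_cast ha (n+2) (by omega) hnm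
        have hq1 := h1.2 (by omega)
        have hq0 := h0.1
        constructor
        · nlinarith
        · intro _; nlinarith
  -- continued fraction values
  have hLcons : ∀ n, 1 ≤ n → n < m →
      (List.range' n (m + 1 - n)).map a = a n :: (List.range' (n+1) (m + 1 - (n+1))).map a := by
    intro n h1 h2
    rw [show m + 1 - n = (m - n) + 1 by omega, List.range'_succ]
    simp [show m + 1 - (n+1) = m - n by omega]
  have hLne : ∀ n, 1 ≤ n → n ≤ m → (List.range' n (m + 1 - n)).map a ≠ [] := by
    intro n h1 h2
    simp [List.range'_eq_nil_iff]
    omega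
  have hypos : ∀ n, 1 ≤ n → n ≤ m → 0 < cfVal ((List.range' n (m + 1 - n)).map a) := by
    intro n h1 h2
    apply cfVal_pos _ (hLne n h1 h2)
    intro x hx
    simp only [List.mem_map, List.mem_range'_1] at hx
    obtain ⟨i, hi, rfl⟩ := hx
    exact ha i (by omega) (by omega)
  have hyrec : ∀ n, 1 ≤ n → n < m →
      cfVal ((List.range' n (m + 1 - n)).map a)
        = (a n : ℚ) + 1 / cfVal ((List.range' (n+1) (m + 1 - (n+1))).map a) := by
    intro n h1 h2
    rw [hLcons n h1 h2]
    exact cfVal_cons _ _ (hLne (n+1) (by omega) (by omega))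
  have hylast : cfVal ((List.range' m (m + 1 - m)).map a) = (a m : ℚ) := by
    rw [show m + 1 - m = 1 by omega]
    rfl
  have hC : ∀ n, 1 ≤ n → n + 1 ≤ m →
      cfVal ((List.range' 1 (m + 1 - 1)).map a)
          * (cfVal ((List.range' (n+1) (m + 1 - (n+1))).map a) * (Q n : ℚ) + (Q (n-1) : ℚ))
        = cfVal ((List.range' (n+1) (m + 1 - (n+1))).map a) * (P n : ℚ) + (P (n-1) : ℚ) := by
    intro n
    induction n with
    | zero => omega
    | succ n ih =>
      intro _ hle
      rcases Nat.eq_zero_or_pos n with rfl | hn1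
      · have hy := hyrec 1 le_rfl (by omega)
        have hpos2 := hypos 2 (by omega) (by omega)
        rw [hy, hQ1, hQ0, hP1, hP0]
        have h2 : cfVal ((List.range' 2 (m + 1 - 2)).map a) ≠ 0 := ne_of_gt hpos2
        field_simp
        push_cast
        ring
      · have hCn := ih (by omega) (by omega)
        have hy := hyrec (n+1) (by omega) (by omega)
        have hpos := hypos (n+2) (by omega) (by omega)
        have h2 : cfVal ((List.range' (n+2) (m + 1 - (n+2))).map a) ≠ 0 := ne_of_gt hpos
        rw [hy] at hCn
        simp only [Nat.add_sub_cancel] at hCn ⊢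
        have hPr : (P (n+1) : ℚ) = (a (n+1) : ℚ) * (P n : ℚ) + (P (n-1) : ℚ) := by
          exact_mod_cast congrArg (fun z : ℤ => (z : ℚ)) (hP n hn1 (by omega))
        have hQr : (Q (n+1) : ℚ) = (a (n+1) : ℚ) * (Q n : ℚ) + (Q (n-1) : ℚ) := by
          exact_mod_cast congrArg (fun z : ℤ => (z : ℚ)) (hQ n hn1 (by omega))
        rw [hPr, hQr]
        field_simp at hCn ⊢
        linear_combination hCn
  -- finish
  obtain ⟨hpm, hqm⟩ := pq m le_rfl
  have hQm : 0 < Q m := (hQge m le_rfl).2 hm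
  have hQmQ : ((Q m : ℚ)) ≠ 0 := by exact_mod_cast ne_of_gt hQm
  have hfinal : cfVal ((List.range' 1 (m + 1 - 1)).map a) * (Q m : ℚ) = (P m : ℚ) := by
    rcases Nat.lt_or_ge m 2 with hm1 | hm2
    · have hm' : m = 1 := by omega
      subst hm'
      rw [hylast, hQ1, hP1]
      push_cast
      ring
    · obtain ⟨n, rfl⟩ : ∃ n, m = n + 2 := ⟨m - 2, by omega⟩
      have hCn := hC (n+1) (by omega) le_rfl
      rw [hylast] at hCn
      simp only [Nat.add_sub_cancel] at hCn
      have hPr : (P (n+2) : ℚ) = (a (n+2) : ℚ) * (P (n+1) : ℚ) + (P n : ℚ) := by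
        have := hP (n+1) (by omega) le_rfl
        simp only [Nat.add_sub_cancel] at this
        exact_mod_cast congrArg (fun z : ℤ => (z : ℚ)) this
      have hQr : (Q (n+2) : ℚ) = (a (n+2) : ℚ) * (Q (n+1) : ℚ) + (Q n : ℚ) := by
        have := hQ (n+1) (by omega) le_rfl
        simp only [Nat.add_sub_cancel] at this
        exact_mod_cast congrArg (fun z : ℤ => (z : ℚ)) this
      simp only [Nat.add_sub_cancel]
      rw [hPr, hQr]
      linear_combination hCn
  rw [hpm, hqm, show m + 1 - 1 = m from by omega] at *
  rw [div_eq_iff hQmQ]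
  linarith [hfinal]
end

section
/- For every 0 ≤ n ≤ m−1 and every t ∈ {1,2,3}, writing i = i_{n+1}, j = j_{n+1}, k = k_{n+1}, a = a_{n+1}, and d_{rt} = d_{rt}(n), one has s_{n+1,t} = a·s_{n,t} + a·(d_{it} + d_{jt} − d_{kt} + δ_{it} + δ_{jt}) + (d_{it} − d_{jt} + d_{kt} − δ_{jt}). -/
lemma fc1 (a : ℕ) : (⌊(a:ℚ)/2⌋ + ⌈(a:ℚ)/2⌉ : ℤ) = a := by
  rcases Nat.even_or_odd a with ⟨b,hb⟩ | ⟨b,hb⟩ <;> subst hb <;> push_cast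
  · norm_num
  · have h1 : ⌊(2*(b:ℚ)+1)/2⌋ = (b:ℤ) := by
      rw [Int.floor_eq_iff]; constructor <;> push_cast <;> linarith
    have h2 : ⌈(2*(b:ℚ)+1)/2⌉ = (b:ℤ)+1 := by
      rw [Int.ceil_eq_iff]; constructor <;> push_cast <;> linarith
    rw [h1, h2]; ring

lemma fc2 (a : ℕ) : (⌈((a:ℚ)-1)/2⌉ + ⌊((a:ℚ)-1)/2⌋ : ℤ) = (a:ℤ) - 1 := by
  rcases Nat.even_or_odd a with ⟨b,hb⟩ | ⟨b,hb⟩ <;> subst hb <;> push_cast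
  · have h1 : ⌊(2*(b:ℚ)-1)/2⌋ = (b:ℤ)-1 := by
      rw [Int.floor_eq_iff]; constructor <;> push_cast <;> linarith
    have h2 : ⌈(2*(b:ℚ)-1)/2⌉ = (b:ℤ) := by
      rw [Int.ceil_eq_iff]; constructor <;> push_cast <;> linarith
    rw [show (b:ℚ)+b = 2*b by ring, h1, h2]; ring
  · rw [show (2*(b:ℚ)+1-1)/2 = b by ring, Int.floor_natCast, Int.ceil_natCast]; ring

set_option maxHeartbeats 2000000 in
lemma key_sum (a : ℕ) (i j k : Fin 3) (hij : i ≠ j) (hik : i ≠ k) (hjk : j ≠ k)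
    (Dn : Matrix (Fin 3) (Fin 3) ℤ) (t : Fin 3)
    (DN : Matrix (Fin 3) (Fin 3) ℤ)
    (hDN : DN = 2 * Mmat a i j * Dn + Dn + Mmat a i j) :
    DN 0 t + DN 1 t + DN 2 t
      = (a:ℤ) * (Dn 0 t + Dn 1 t + Dn 2 t)
      + (a:ℤ) * (Dn i t + Dn j t - Dn k t + (kd i t : ℤ) + (kd j t : ℤ))
      + (Dn i t - Dn j t + Dn k t - (kd j t : ℤ)) := by
  have e1 := fc1 a
  have e2 := fc2 a
  have hC1 : (⌈(a:ℚ)/2⌉:ℤ) = (a:ℤ) - ⌊(a:ℚ)/2⌋ := by linarith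
  have hF2 : (⌊((a:ℚ)-1)/2⌋:ℤ) = (a:ℤ) - 1 - ⌈((a:ℚ)-1)/2⌉ := by linarith
  subst hDN
  rw [two_mul, add_mul]
  simp only [Matrix.add_apply, Matrix.mul_apply, Fin.sum_univ_three]
  fin_cases i <;> fin_cases j <;> fin_cases k <;>
    first
      | exact absurd rfl hij | exact absurd rfl hik | exact absurd rfl hjk
      | (fin_cases t <;> simp [Mmat, kd] <;> rw [hC1, hF2] <;> ring)

theorem sum_recurrence
    (m : ℕ) (hm : 1 ≤ m) (a : ℕ → ℕ)
    (ha : ∀ n, 1 ≤ n → n ≤ m → 0 < a n)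
    (σ : ℕ → Equiv.Perm (Fin 3))
    (hσ1 : σ 1 = 1)
    (hσ : ∀ n, 1 ≤ n → n ≤ m →
      σ (n + 1) = if Even (a n) then σ n * trans13 else σ n * cyc132)
    (D : ℕ → Matrix (Fin 3) (Fin 3) ℤ)
    (hD0 : D 0 = 0)
    (hD : ∀ n, n + 1 ≤ m →
      D (n + 1) = 2 * Mmat (a (n + 1)) (σ (n + 1) 0) (σ (n + 1) 1) * D n + D n
        + Mmat (a (n + 1)) (σ (n + 1) 0) (σ (n + 1) 1))
    (s : ℕ → Fin 3 → ℤ)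
    (hs : ∀ n t, s n t = D n 0 t + D n 1 t + D n 2 t)
 :
    ∀ n, n + 1 ≤ m → ∀ t : Fin 3,
      s (n + 1) t = (a (n + 1) : ℤ) * s n t
        + (a (n + 1) : ℤ) * (D n (σ (n + 1) 0) t + D n (σ (n + 1) 1) t
            - D n (σ (n + 1) 2) t + (kd (σ (n + 1) 0) t : ℤ) + (kd (σ (n + 1) 1) t : ℤ))
        + (D n (σ (n + 1) 0) t - D n (σ (n + 1) 1) t + D n (σ (n + 1) 2) t
            - (kd (σ (n + 1) 1) t : ℤ)) := by
  intro n hn t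
  have hinj := (σ (n + 1)).injective
  have h01 : σ (n + 1) 0 ≠ σ (n + 1) 1 := fun h => absurd (hinj h) (by decide)
  have h02 : σ (n + 1) 0 ≠ σ (n + 1) 2 := fun h => absurd (hinj h) (by decide)
  have h12 : σ (n + 1) 1 ≠ σ (n + 1) 2 := fun h => absurd (hinj h) (by decide)
  rw [hs (n + 1) t, hs n t]
  exact key_sum (a (n + 1)) _ _ _ h01 h02 h12 (D n) t (D (n + 1)) (hD n hn)
end

section
/- For every 0 ≤ n ≤ m−1 and every t ∈ {1,2,3}, writing i = i_{n+1}, j = j_{n+1}, a = a_{n+1}, d_{rt} = d_{rt}(n), and d'_{rt} = d_{rt}(n+1), one has d'_{it} − d'_{jt} = (−1)^{μ_a}·(d_{it} + d_{jt} + μ_a·δ_{it} + (1 − μ_a)·δ_{jt}). -/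
set_option maxHeartbeats 1600000 in
lemma key (a : ℕ) (D E : Matrix (Fin 3) (Fin 3) ℤ) (i j t : Fin 3) (hij : i ≠ j)
    (hE : E = 2 * Mmat a i j * D + D + Mmat a i j) :
    E i t - E j t
      = (-1:ℤ)^(mu a) * (D i t + D j t + (mu a : ℤ) * (kd i t) + (1 - (mu a : ℤ)) * (kd j t)) := by
  have hsplit : 2 * Mmat a i j * D = Mmat a i j * D + Mmat a i j * D := by
    rw [two_mul, Matrix.add_mul]
  rw [hE, hsplit]
  rcases Nat.even_or_odd a with ⟨k, hk⟩ | ⟨k, hk⟩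
  · have hmu : mu a = 0 := by simp [mu, Nat.odd_iff, hk]; omega
    have h1 : ⌊(a : ℚ) / 2⌋ = (k : ℤ) := by
      have : (a : ℚ) / 2 = (k : ℚ) := by rw [hk]; push_cast; ring
      rw [this, Int.floor_natCast]
    have h2 : ⌈((a : ℚ) - 1) / 2⌉ = (k : ℤ) := by
      have : ((a : ℚ) - 1) / 2 = (k : ℚ) - 1/2 := by rw [hk]; push_cast; ring
      rw [this, Int.ceil_eq_iff]
      constructor <;> push_cast <;> linarith
    have h3 : ⌈(a : ℚ) / 2⌉ = (k : ℤ) := by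
      have : (a : ℚ) / 2 = (k : ℚ) := by rw [hk]; push_cast; ring
      rw [this, Int.ceil_natCast]
    have h4 : ⌊((a : ℚ) - 1) / 2⌋ = (k : ℤ) - 1 := by
      have : ((a : ℚ) - 1) / 2 = (k : ℚ) - 1/2 := by rw [hk]; push_cast; ring
      rw [this, Int.floor_eq_iff]
      constructor <;> push_cast <;> linarith
    simp only [Matrix.add_apply, Matrix.mul_apply, Fin.sum_univ_three,
      Mmat, Matrix.of_apply, hmu, kd, h1, h2, h3, h4]
    fin_cases i <;> fin_cases j <;> simp_all <;> fin_cases t <;> simp [kd] <;> ring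
  · have hmu : mu a = 1 := by simp [mu]; exact ⟨k, hk⟩
    have h1 : ⌊(a : ℚ) / 2⌋ = (k : ℤ) := by
      have : (a : ℚ) / 2 = (k : ℚ) + 1/2 := by rw [hk]; push_cast; ring
      rw [this, Int.floor_eq_iff]
      constructor <;> push_cast <;> linarith
    have h2 : ⌈((a : ℚ) - 1) / 2⌉ = (k : ℤ) := by
      have : ((a : ℚ) - 1) / 2 = (k : ℚ) := by rw [hk]; push_cast; ring
      rw [this, Int.ceil_natCast]
    have h3 : ⌈(a : ℚ) / 2⌉ = (k : ℤ) + 1 := by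
      have : (a : ℚ) / 2 = (k : ℚ) + 1/2 := by rw [hk]; push_cast; ring
      rw [this, Int.ceil_eq_iff]
      constructor <;> push_cast <;> linarith
    have h4 : ⌊((a : ℚ) - 1) / 2⌋ = (k : ℤ) := by
      have : ((a : ℚ) - 1) / 2 = (k : ℚ) := by rw [hk]; push_cast; ring
      rw [this, Int.floor_natCast]
    simp only [Matrix.add_apply, Matrix.mul_apply, Fin.sum_univ_three,
      Mmat, Matrix.of_apply, hmu, kd, h1, h2, h3, h4]
    fin_cases i <;> fin_cases j <;> simp_all <;> fin_cases t <;> simp [kd] <;> ring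

theorem guide_difference
    (m : ℕ) (hm : 1 ≤ m) (a : ℕ → ℕ)
    (ha : ∀ n, 1 ≤ n → n ≤ m → 0 < a n)
    (σ : ℕ → Equiv.Perm (Fin 3))
    (hσ1 : σ 1 = 1)
    (hσ : ∀ n, 1 ≤ n → n ≤ m →
      σ (n + 1) = if Even (a n) then σ n * trans13 else σ n * cyc132)
    (D : ℕ → Matrix (Fin 3) (Fin 3) ℤ)
    (hD0 : D 0 = 0)
    (hD : ∀ n, n + 1 ≤ m →
      D (n + 1) = 2 * Mmat (a (n + 1)) (σ (n + 1) 0) (σ (n + 1) 1) * D n + D n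
        + Mmat (a (n + 1)) (σ (n + 1) 0) (σ (n + 1) 1))
    (s : ℕ → Fin 3 → ℤ)
    (hs : ∀ n t, s n t = D n 0 t + D n 1 t + D n 2 t)
 :
    ∀ n, n + 1 ≤ m → ∀ t : Fin 3,
      D (n + 1) (σ (n + 1) 0) t - D (n + 1) (σ (n + 1) 1) t
        = (-1 : ℤ) ^ (mu (a (n + 1))) *
          (D n (σ (n + 1) 0) t + D n (σ (n + 1) 1) t
            + (mu (a (n + 1)) : ℤ) * (kd (σ (n + 1) 0) t : ℤ)
            + (1 - (mu (a (n + 1)) : ℤ)) * (kd (σ (n + 1) 1) t : ℤ)) := by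
  intro n hn t
  have hij : σ (n + 1) 0 ≠ σ (n + 1) 1 := fun h =>
    absurd ((σ (n + 1)).injective h) (by decide)
  exact key (a (n + 1)) (D n) (D (n + 1)) _ _ t hij (hD n hn)
end

section
/- For every 1 ≤ n ≤ m and every t ∈ {1,2,3}, writing i = i_{n+1}, j = j_{n+1}, k = k_{n+1}, and d_{rt} = d_{rt}(n), one has s_{n−1,t} = d_{it} − d_{jt} + d_{kt} − δ_{jt}. -/
lemma ceil_half_even (c : ℤ) (h : Even c) : ⌈(c:ℚ)/2⌉ = ⌊(c:ℚ)/2⌋ := by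
  obtain ⟨d, rfl⟩ := h
  have : ((d+d : ℤ):ℚ)/2 = (d:ℚ) := by push_cast; ring
  rw [this, Int.ceil_intCast, Int.floor_intCast]

lemma ceil_half_odd (c : ℤ) (h : Odd c) : ⌈(c:ℚ)/2⌉ = ⌊(c:ℚ)/2⌋ + 1 := by
  obtain ⟨d, rfl⟩ := h
  have : ((2*d+1 : ℤ):ℚ)/2 = 1/2 + (d:ℚ) := by push_cast; ring
  rw [this, show (1/2 + (d:ℚ)) = 1/2 + ((d:ℤ):ℚ) by norm_num,
    Int.ceil_add_intCast, Int.floor_add_intCast]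
  have h1 : ⌈(1/2:ℚ)⌉ = 1 := by norm_num [Int.ceil_eq_iff]
  have h2 : ⌊(1/2:ℚ)⌋ = 0 := by norm_num [Int.floor_eq_iff]
  omega

lemma Mmul (a : ℕ) (i j : Fin 3) (hij : i ≠ j) (X : Matrix (Fin 3) (Fin 3) ℤ) (r t : Fin 3) :
    (Mmat a i j * X) r t = Mmat a i j r i * X i t + Mmat a i j r j * X j t := by
  rw [Matrix.mul_apply, Fin.sum_univ_three]
  fin_cases i <;> fin_cases j <;> fin_cases r <;> simp_all [Mmat] <;> ring

lemma Mii (a : ℕ) (i j : Fin 3) : Mmat a i j i i = ⌊(a:ℚ)/2⌋ := by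
  simp [Mmat]
lemma Mij (a : ℕ) (i j : Fin 3) (hij : i ≠ j) : Mmat a i j i j = ⌈((a:ℚ)-1)/2⌉ := by
  simp [Mmat, hij, Ne.symm hij]
lemma Mji (a : ℕ) (i j : Fin 3) (hij : i ≠ j) : Mmat a i j j i = ⌈(a:ℚ)/2⌉ := by
  simp [Mmat, hij, Ne.symm hij]
lemma Mjj (a : ℕ) (i j : Fin 3) (hij : i ≠ j) : Mmat a i j j j = ⌊((a:ℚ)-1)/2⌋ := by
  simp [Mmat, hij, Ne.symm hij]
lemma Mk0 (a : ℕ) (i j k : Fin 3) (hki : k ≠ i) (hkj : k ≠ j) (t : Fin 3) :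
    Mmat a i j k t = 0 := by
  simp [Mmat, hki, hkj]

lemma Mc0 (a : ℕ) (i j k : Fin 3) (hki : k ≠ i) (hkj : k ≠ j) (r : Fin 3) :
    Mmat a i j r k = 0 := by
  simp [Mmat, hki, hkj]

lemma three_cases (i j k u : Fin 3) (hij : i ≠ j) (hik : i ≠ k) (hjk : j ≠ k) :
    u = i ∨ u = j ∨ u = k := by revert hij hik hjk; revert i j k u; decide
theorem previous_sum_formula
    (m : ℕ) (hm : 1 ≤ m) (a : ℕ → ℕ)
    (ha : ∀ n, 1 ≤ n → n ≤ m → 0 < a n)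
    (σ : ℕ → Equiv.Perm (Fin 3))
    (hσ1 : σ 1 = 1)
    (hσ : ∀ n, 1 ≤ n → n ≤ m →
      σ (n + 1) = if Even (a n) then σ n * trans13 else σ n * cyc132)
    (D : ℕ → Matrix (Fin 3) (Fin 3) ℤ)
    (hD0 : D 0 = 0)
    (hD : ∀ n, n + 1 ≤ m →
      D (n + 1) = 2 * Mmat (a (n + 1)) (σ (n + 1) 0) (σ (n + 1) 1) * D n + D n
        + Mmat (a (n + 1)) (σ (n + 1) 0) (σ (n + 1) 1))
    (s : ℕ → Fin 3 → ℤ)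
    (hs : ∀ n t, s n t = D n 0 t + D n 1 t + D n 2 t)
 :
    ∀ n, 1 ≤ n → n ≤ m → ∀ t : Fin 3,
      s (n - 1) t = D n (σ (n + 1) 0) t - D n (σ (n + 1) 1) t
        + D n (σ (n + 1) 2) t - (kd (σ (n + 1) 1) t : ℤ) := by
  intro n h1 h2 t
  obtain ⟨p, rfl⟩ : ∃ p, n = p + 1 := ⟨n - 1, by omega⟩
  simp only [Nat.add_sub_cancel]
  have hij : σ (p+1) 0 ≠ σ (p+1) 1 := fun h => absurd ((σ (p+1)).injective h) (by decide)
  have hik : σ (p+1) 0 ≠ σ (p+1) 2 := fun h => absurd ((σ (p+1)).injective h) (by decide)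
  have hjk : σ (p+1) 1 ≠ σ (p+1) 2 := fun h => absurd ((σ (p+1)).injective h) (by decide)
  set i := σ (p+1) 0 with hi
  set j := σ (p+1) 1 with hj
  set k := σ (p+1) 2 with hk
  set a' := a (p+1) with ha'
  have hDp : D (p+1) = 2 * Mmat a' i j * D p + D p + Mmat a' i j := hD p h2
  have hrow : ∀ r u, D (p+1) r u
      = 2 * (Mmat a' i j r i * D p i u + Mmat a' i j r j * D p j u)
        + D p r u + Mmat a' i j r u := by
    intro r u
    rw [hDp]
    have h2M : (2 * Mmat a' i j : Matrix (Fin 3) (Fin 3) ℤ)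
        = Mmat a' i j + Mmat a' i j := two_mul _
    simp only [h2M, Matrix.add_mul, Matrix.add_apply, Mmul a' i j hij]
    ring
  have hsum : D p i t + D p j t + D p k t = D p 0 t + D p 1 t + D p 2 t := by
    have h := Equiv.sum_comp (σ (p+1)) (fun r => D p r t)
    rw [Fin.sum_univ_three, Fin.sum_univ_three] at h
    exact h
  have hστ := hσ (p+1) h1 h2
  have hpos : 0 < a' := ha (p+1) h1 h2
  rw [hs]
  by_cases hev : Even a'
  · rw [hστ, if_pos hev]
    have e0 : (σ (p+1) * trans13) 0 = k := by
      rw [Equiv.Perm.mul_apply, show trans13 0 = 2 from by decide]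
    have e1 : (σ (p+1) * trans13) 1 = j := by
      rw [Equiv.Perm.mul_apply, show trans13 1 = 1 from by decide]
    have e2 : (σ (p+1) * trans13) 2 = i := by
      rw [Equiv.Perm.mul_apply, show trans13 2 = 0 from by decide]
    rw [e0, e1, e2]
    have hC : ⌈(a':ℚ)/2⌉ = ⌊(a':ℚ)/2⌋ := by
      have h := ceil_half_even (a':ℤ) ((Int.even_coe_nat a').mpr hev)
      push_cast at h; exact h
    have hB : ⌈((a':ℚ)-1)/2⌉ = ⌊((a':ℚ)-1)/2⌋ + 1 := by
      obtain ⟨d, hd⟩ := hev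
      have hodd : Odd ((a':ℤ)-1) := ⟨(d:ℤ)-1, by push_cast [hd]; ring⟩
      have h := ceil_half_odd ((a':ℤ)-1) hodd
      push_cast at h; exact h
    rw [hrow k t, hrow i t, hrow j t]
    rcases three_cases i j k t hij hik hjk with rfl | rfl | rfl <;>
      simp only [Mk0 a' i j k (Ne.symm hik) (Ne.symm hjk),
        Mc0 a' i j k (Ne.symm hik) (Ne.symm hjk),
        Mii, Mij a' i j hij, Mji a' i j hij, Mjj a' i j hij, hB, hC, kd,
        if_neg (Ne.symm hij), if_pos rfl, if_neg hjk, if_true, Nat.cast_zero, Nat.cast_one] <;>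
      linarith [hsum]
  · rw [hστ, if_neg hev]
    have e0 : (σ (p+1) * cyc132) 0 = k := by
      rw [Equiv.Perm.mul_apply, show cyc132 0 = 2 from by decide]
    have e1 : (σ (p+1) * cyc132) 1 = i := by
      rw [Equiv.Perm.mul_apply, show cyc132 1 = 0 from by decide]
    have e2 : (σ (p+1) * cyc132) 2 = j := by
      rw [Equiv.Perm.mul_apply, show cyc132 2 = 1 from by decide]
    rw [e0, e1, e2]
    have hodd : Odd a' := Nat.odd_iff.mpr (Nat.not_even_iff.mp hev)
    have hC : ⌈(a':ℚ)/2⌉ = ⌊(a':ℚ)/2⌋ + 1 := by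
      have h := ceil_half_odd (a':ℤ) ((Int.odd_coe_nat a').mpr hodd)
      push_cast at h; exact h
    have hB : ⌈((a':ℚ)-1)/2⌉ = ⌊((a':ℚ)-1)/2⌋ := by
      have hev' : Even ((a':ℤ)-1) := by
        rcases hodd with ⟨d, hd⟩
        exact ⟨d, by push_cast [hd]; ring⟩
      have h := ceil_half_even ((a':ℤ)-1) hev'
      push_cast at h; exact h
    rw [hrow k t, hrow i t, hrow j t]
    rcases three_cases i j k t hij hik hjk with rfl | rfl | rfl <;>
      simp only [Mk0 a' i j k (Ne.symm hik) (Ne.symm hjk),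
        Mc0 a' i j k (Ne.symm hik) (Ne.symm hjk),
        Mii, Mij a' i j hij, Mji a' i j hij, Mjj a' i j hij, hB, hC, kd,
        if_pos rfl, if_neg hij, if_neg hik, if_true, Nat.cast_zero, Nat.cast_one] <;>
      linarith [hsum]
end

section
/- For every 0 ≤ n ≤ m and every t ∈ {1,2,3}, writing k = k_{n+1} and d_{rt} = d_{rt}(n), one has s_{n,t} = 2·d_{kt} + δ_{kt} − δ_{3t} − (−1)^{δ_{3t}}·μ_n. -/
set_option maxHeartbeats 1000000

lemma fh (c : ℤ) : ⌊(c:ℚ)/2⌋ = c / 2 := by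
  exact_mod_cast Rat.floor_intCast_div_natCast c 2

lemma ch (c : ℤ) : ⌈(c:ℚ)/2⌉ = -(-c / 2) := by
  have := fh (-c)
  rw [show ((-c:ℤ):ℚ)/2 = -((c:ℚ)/2) by push_cast; ring, Int.floor_neg] at this
  omega

lemma step_even (b : ℕ) (i j k : Fin 3) (hij : i ≠ j) (hik : i ≠ k) (hjk : j ≠ k)
    (Dn D' : Matrix (Fin 3) (Fin 3) ℤ)
    (hD' : D' = 2 * Mmat (b+b) i j * Dn + Dn + Mmat (b+b) i j)
    (t : Fin 3) (c : ℤ)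
    (h : Dn 0 t + Dn 1 t + Dn 2 t = 2 * Dn k t + c) :
    D' 0 t + D' 1 t + D' 2 t
    = 2 * D' i t + (if i = t then 1 else 0) + (if k = t then 1 else 0) - 1 - c := by
  have E1 : ⌊((b+b:ℕ):ℚ)/2⌋ = (b:ℤ) := by
    rw [show ((b+b:ℕ):ℚ) = (((2*(b:ℤ)):ℤ):ℚ) by push_cast; ring, fh]; omega
  have E2 : (⌈(((b+b:ℕ):ℚ) - 1)/2⌉ : ℤ) = (b:ℤ) := by
    rw [show ((b+b:ℕ):ℚ)-1 = (((2*(b:ℤ)-1):ℤ):ℚ) by push_cast; ring, ch]; omega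
  have E3 : ⌈((b+b:ℕ):ℚ)/2⌉ = (b:ℤ) := by
    rw [show ((b+b:ℕ):ℚ) = (((2*(b:ℤ)):ℤ):ℚ) by push_cast; ring, ch]; omega
  have E4 : (⌊(((b+b:ℕ):ℚ) - 1)/2⌋ : ℤ) = (b:ℤ) - 1 := by
    rw [show ((b+b:ℕ):ℚ)-1 = (((2*(b:ℤ)-1):ℤ):ℚ) by push_cast; ring, fh]; omega
  subst hD'
  simp only [Matrix.add_apply, Matrix.mul_apply, Matrix.add_mul, two_mul,
    Fin.sum_univ_three, Mmat, Matrix.of_apply, E1, E2, E3, E4]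
  fin_cases i <;> fin_cases j <;> fin_cases k <;> fin_cases t <;> simp_all <;>
    first
    | linear_combination h
    | linear_combination -h
    | linear_combination 2*h
    | linear_combination -2*h

lemma step_odd (b : ℕ) (i j k : Fin 3) (hij : i ≠ j) (hik : i ≠ k) (hjk : j ≠ k)
    (Dn D' : Matrix (Fin 3) (Fin 3) ℤ)
    (hD' : D' = 2 * Mmat (2*b+1) i j * Dn + Dn + Mmat (2*b+1) i j)
    (t : Fin 3) (c : ℤ)
    (h : Dn 0 t + Dn 1 t + Dn 2 t = 2 * Dn k t + c) :
    D' 0 t + D' 1 t + D' 2 t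
    = 2 * D' j t + (if j = t then 1 else 0) + (if k = t then 1 else 0) - 1 - c := by
  have E1 : ⌊((b:ℚ) + (b:ℚ) + 1)/2⌋ = (b:ℤ) := by
    rw [show (b:ℚ) + (b:ℚ) + 1 = (((2*(b:ℤ)+1):ℤ):ℚ) by push_cast; ring, fh]; omega
  have E2 : (⌈(((2*b+1:ℕ):ℚ) - 1)/2⌉ : ℤ) = (b:ℤ) := by
    rw [show ((2*b+1:ℕ):ℚ)-1 = (((2*(b:ℤ)):ℤ):ℚ) by push_cast; ring, ch]; omega
  have E3 : ⌈((b:ℚ) + (b:ℚ) + 1)/2⌉ = (b:ℤ)+1 := by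
    rw [show (b:ℚ) + (b:ℚ) + 1 = (((2*(b:ℤ)+1):ℤ):ℚ) by push_cast; ring, ch]; omega
  have E4 : (⌊(((2*b+1:ℕ):ℚ) - 1)/2⌋ : ℤ) = (b:ℤ) := by
    rw [show ((2*b+1:ℕ):ℚ)-1 = (((2*(b:ℤ)):ℤ):ℚ) by push_cast; ring, fh]; omega
  subst hD'
  simp only [Matrix.add_apply, Matrix.mul_apply, Matrix.add_mul, two_mul,
    Fin.sum_univ_three, Mmat, Matrix.of_apply, E1, E2, E3, E4]
  fin_cases i <;> fin_cases j <;> fin_cases k <;> fin_cases t <;> simp_all <;>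
    first
    | linear_combination h
    | linear_combination -h
    | linear_combination 2*h
    | linear_combination -2*h

lemma tail_arith (r k t : Fin 3) (n : ℕ) :
    (if r = t then (1:ℤ) else 0) + (if k = t then 1 else 0) - 1
      - ((kd k t : ℤ) - (kd 2 t : ℤ) - (-1:ℤ)^(kd 2 t) * (mu n : ℤ))
    = (kd r t : ℤ) - (kd 2 t : ℤ) - (-1:ℤ)^(kd 2 t) * (mu (n+1) : ℤ) := by
  simp only [kd, mu, Nat.odd_add_one, Nat.even_iff, Nat.odd_iff]
  split_ifs <;> norm_num <;> omega

theorem sum_from_idle_row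
    (m : ℕ) (hm : 1 ≤ m) (a : ℕ → ℕ)
    (ha : ∀ n, 1 ≤ n → n ≤ m → 0 < a n)
    (σ : ℕ → Equiv.Perm (Fin 3))
    (hσ1 : σ 1 = 1)
    (hσ : ∀ n, 1 ≤ n → n ≤ m →
      σ (n + 1) = if Even (a n) then σ n * trans13 else σ n * cyc132)
    (D : ℕ → Matrix (Fin 3) (Fin 3) ℤ)
    (hD0 : D 0 = 0)
    (hD : ∀ n, n + 1 ≤ m →
      D (n + 1) = 2 * Mmat (a (n + 1)) (σ (n + 1) 0) (σ (n + 1) 1) * D n + D n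
        + Mmat (a (n + 1)) (σ (n + 1) 0) (σ (n + 1) 1))
    (s : ℕ → Fin 3 → ℤ)
    (hs : ∀ n t, s n t = D n 0 t + D n 1 t + D n 2 t)
 :
    ∀ n ≤ m, ∀ t : Fin 3,
      s n t = 2 * D n (σ (n + 1) 2) t + (kd (σ (n + 1) 2) t : ℤ)
        - (kd 2 t : ℤ) - (-1 : ℤ) ^ (kd 2 t) * (mu n : ℤ) := by
  intro n
  induction n with
  | zero =>
    intro _ t
    simp [hs, hD0, hσ1, mu, kd, Equiv.Perm.one_apply]
  | succ n ih =>
    intro hn1 t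
    have hn : n ≤ m := Nat.le_of_succ_le hn1
    have IH := ih hn
    have h01 : σ (n+1) 0 ≠ σ (n+1) 1 := (σ (n+1)).injective.ne (by decide)
    have h02 : σ (n+1) 0 ≠ σ (n+1) 2 := (σ (n+1)).injective.ne (by decide)
    have h12 : σ (n+1) 1 ≠ σ (n+1) 2 := (σ (n+1)).injective.ne (by decide)
    have hσ2 := hσ (n+1) (by omega) hn1
    have hcomb : D n 0 t + D n 1 t + D n 2 t
        = 2 * D n (σ (n+1) 2) t
          + ((kd (σ (n+1) 2) t : ℤ) - (kd 2 t : ℤ)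
            - (-1:ℤ)^(kd 2 t) * (mu n : ℤ)) := by
      rw [← hs, IH t]; ring
    rcases Nat.even_or_odd (a (n+1)) with he | ho
    · have hk2 : σ (n+1+1) 2 = σ (n+1) 0 := by
        rw [hσ2, if_pos he, Equiv.Perm.mul_apply, show trans13 2 = 0 from by decide]
      obtain ⟨b, hb⟩ := id he
      have key := step_even b (σ (n+1) 0) (σ (n+1) 1) (σ (n+1) 2) h01 h02 h12
        (D n) (D (n+1)) (by rw [hD n hn1, hb]) t _ hcomb
      rw [hs, key, hk2]
      linear_combination tail_arith (σ (n+1) 0) (σ (n+1) 2) t n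
    · have hk2 : σ (n+1+1) 2 = σ (n+1) 1 := by
        rw [hσ2, if_neg (Nat.not_even_iff_odd.mpr ho), Equiv.Perm.mul_apply,
          show cyc132 2 = 1 from by decide]
      obtain ⟨b, hb⟩ := id ho
      have key := step_odd b (σ (n+1) 0) (σ (n+1) 1) (σ (n+1) 2) h01 h02 h12
        (D n) (D (n+1)) (by rw [hD n hn1, hb]) t _ hcomb
      rw [hs, key, hk2]
      linear_combination tail_arith (σ (n+1) 1) (σ (n+1) 2) t n
end
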